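/- Let m ≥ 1. For every set E contained in the upper half-space H = {(t, v) : t > 0, v ∈ ℝ^m}, the conical limit set Λc(E) is a G_{δσ} subset of ℝ^m; that is, there exists a sequence (A_k) of Gδ subsets of ℝ^m with Λc(E) = ⋃_k A_k. -/

import Mathlib

open Filter Topology

/-- The open upper half-space over a normed space `V`: pairs `(t, v)` with `t > 0`. -/
def upperHalf (V : Type*) [NormedAddCommGroup V] : Set (ℝ × V) := {p | 0 < p.1}

/-- The conical limit set of `E ⊆ ℝ × V`: points `x` for which there are `C > 0` and a
sequence `(t_n, v_n)` in `E` with `t_n → 0`, `v_n → x` and `‖v_n - x‖ ≤ C * t_n`. -/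
def conicalLimitSet {V : Type*} [NormedAddCommGroup V] (E : Set (ℝ × V)) : Set V :=
  {x | ∃ C > 0, ∃ w : ℕ → ℝ × V, (∀ n, w n ∈ E) ∧
    Tendsto (fun n => (w n).1) atTop (𝓝 (0 : ℝ)) ∧
    Tendsto (fun n => (w n).2) atTop (𝓝 x) ∧
    ∀ n, ‖(w n).2 - x‖ ≤ C * (w n).1}

/-- `X ⊆ V` is a conical limit set if it is the conical limit set of some subset of the
upper half-space. -/
def IsConicalLimitSet {V : Type*} [NormedAddCommGroup V] (X : Set V) : Prop :=
  ∃ E ⊆ upperHalf V, conicalLimitSet E = X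

/-- For every subset `E` of the upper half-space over `ℝ^m` (`m ≥ 1`), the conical limit
set of `E` is a `G_{δσ}` subset of `ℝ^m`. -/
theorem conicalLimitSet_isGdeltaSigma (m : ℕ) (hm : 1 ≤ m)
    (E : Set (ℝ × EuclideanSpace ℝ (Fin m)))
    (hE : E ⊆ upperHalf (EuclideanSpace ℝ (Fin m))) :
    ∃ A : ℕ → Set (EuclideanSpace ℝ (Fin m)),
      (∀ k, IsGδ (A k)) ∧ conicalLimitSet E = ⋃ k, A k := by
  classical
  let V := EuclideanSpace ℝ (Fin m)
  refine ⟨fun k => ⋂ j : ℕ, ⋃ p ∈ E,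
      {x : V | p.1 < 1 / (j + 1) ∧ ‖p.2 - x‖ < 1 / (j + 1) ∧ ‖p.2 - x‖ < (k + 1) * p.1},
    ?_, ?_⟩
  · intro k
    refine IsGδ.iInter_of_isOpen fun j => isOpen_biUnion fun p hp => ?_
    have hcont : Continuous fun x : V => ‖p.2 - x‖ :=
      (continuous_const.sub continuous_id).norm
    by_cases hc : p.1 < 1 / (j + 1 : ℝ)
    · have : {x : V | p.1 < 1 / (j + 1) ∧ ‖p.2 - x‖ < 1 / (j + 1) ∧ ‖p.2 - x‖ < (k + 1) * p.1}
          = {x : V | ‖p.2 - x‖ < 1 / (j + 1)} ∩ {x : V | ‖p.2 - x‖ < (k + 1) * p.1} := by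
        ext x
        simp only [Set.mem_setOf_eq, Set.mem_inter_iff]
        tauto
      rw [this]
      exact (isOpen_lt hcont continuous_const).inter (isOpen_lt hcont continuous_const)
    · convert isOpen_empty
      ext x
      simp only [Set.mem_setOf_eq, Set.mem_empty_iff_false, iff_false]
      exact fun h => hc h.1
  · ext x
    simp only [Set.mem_iUnion, Set.mem_iInter, Set.mem_setOf_eq]
    constructor
    · rintro ⟨C, hC, w, hwE, ht, hv, hle⟩
      refine ⟨⌈C⌉₊, fun j => ?_⟩
      have hj : (0 : ℝ) < 1 / (j + 1) := by positivity
      have h1 : ∀ᶠ n in atTop, (w n).1 < 1 / (j + 1) :=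
        ht.eventually (Filter.Tendsto.eventually_lt_const hj tendsto_id)
      have h2 : ∀ᶠ n in atTop, ‖(w n).2 - x‖ < 1 / (j + 1) := by
        have : Tendsto (fun n => ‖(w n).2 - x‖) atTop (𝓝 0) := by
          simpa using (hv.sub_const x).norm
        exact this.eventually (Filter.Tendsto.eventually_lt_const hj tendsto_id)
      obtain ⟨n, hn1, hn2⟩ := (h1.and h2).exists
      refine ⟨w n, hwE n, hn1, hn2, ?_⟩
      have htn : 0 < (w n).1 := hE (hwE n)
      calc ‖(w n).2 - x‖ ≤ C * (w n).1 := hle n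
        _ < (⌈C⌉₊ + 1) * (w n).1 := by
            apply mul_lt_mul_of_pos_right _ htn
            exact lt_of_le_of_lt (Nat.le_ceil C) (by linarith [Nat.lt_succ_self ⌈C⌉₊])
    · rintro ⟨k, hk⟩
      choose p hpE h1 h2 h3 using hk
      have hjlim : Tendsto (fun j : ℕ => 1 / (j + 1 : ℝ)) atTop (𝓝 0) :=
        tendsto_one_div_add_atTop_nhds_zero_nat
      refine ⟨(k : ℝ) + 1, by positivity, p, hpE, ?_, ?_, fun n => (h3 n).le⟩
      · refine squeeze_zero (fun j => (hE (hpE j)).le) (fun j => (h1 j).le) hjlim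
      · rw [tendsto_iff_norm_sub_tendsto_zero]
        exact squeeze_zero (fun j => norm_nonneg _) (fun j => (h2 j).le) hjlim
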